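/- There exist no τ₁ < τ₂ in (0,∞) such that a finite-energy radial solution (u,v) satisfies F₂(τ₁) = F₂(τ₂) = 2N₂ with v(τ₂) < 0 < v(τ₁) and v strictly decreasing on (τ₁, τ₂), where F₂(r) = ∫₀^r t e^{u}(e^{v}-1) dt. (Non-oscillation of v.) -/

import Mathlib

open MeasureTheory Real intervalIntegral

lemma auxD (f : ℝ → ℝ) (hf : ContDiffOn ℝ 2 f (Set.Ioi 0)) {r : ℝ} (hr : 0 < r) :
    HasDerivAt f (deriv f r) r := by
  have h1 : DifferentiableOn ℝ f (Set.Ioi 0) := hf.differentiableOn (by norm_num)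
  exact (h1.differentiableAt (isOpen_Ioi.mem_nhds hr)).hasDerivAt

lemma auxD2 (f : ℝ → ℝ) (hf : ContDiffOn ℝ 2 f (Set.Ioi 0)) (R : ℝ → ℝ)
    (hODE : ∀ r > (0:ℝ), deriv (fun s => s * deriv f s) r = R r) {r : ℝ} (hr : 0 < r) :
    HasDerivAt (fun s => s * deriv f s) (R r) r := by
  have hd1 : ContDiffOn ℝ 1 (deriv f) (Set.Ioi 0) := hf.deriv_of_isOpen isOpen_Ioi (by norm_num)
  have h2 : DifferentiableOn ℝ (deriv f) (Set.Ioi 0) := hd1.differentiableOn (by norm_num)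
  have h3 : HasDerivAt (deriv f) (deriv (deriv f) r) r :=
    (h2.differentiableAt (isOpen_Ioi.mem_nhds hr)).hasDerivAt
  have h4 : HasDerivAt (fun s => s * deriv f s) (1 * deriv f r + r * deriv (deriv f) r) r :=
    (hasDerivAt_id r).mul h3
  have h5 := h4.deriv
  rw [hODE r hr] at h5
  rw [h5]; exact h4

lemma auxDerivCont (f : ℝ → ℝ) (hf : ContDiffOn ℝ 2 f (Set.Ioi 0)) :
    ContinuousOn (deriv f) (Set.Ioi 0) :=
  ((hf.deriv_of_isOpen isOpen_Ioi (n := 2) (m := 1) (by norm_num)).continuousOn)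

set_option maxHeartbeats 2000000 in
theorem stmt15 (N₁ N₂ : ℕ) (u v : ℝ → ℝ)
    (hu : ContDiffOn ℝ 2 u (Set.Ioi 0)) (hv : ContDiffOn ℝ 2 v (Set.Ioi 0))
    (hODEu : ∀ r > (0 : ℝ),
      deriv (fun s => s * deriv u s) r = -(r * Real.exp (v r) * (Real.exp (u r) + 1)))
    (hODEv : ∀ r > (0 : ℝ),
      deriv (fun s => s * deriv v s) r = -(r * Real.exp (u r) * (Real.exp (v r) - 1)))
    (hu0 : ∃ C ε, 0 < ε ∧ ∀ r ∈ Set.Ioo (0 : ℝ) ε, |u r - 2 * N₁ * Real.log r| ≤ C)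
    (hv0 : ∃ C ε, 0 < ε ∧ ∀ r ∈ Set.Ioo (0 : ℝ) ε, |v r - 2 * N₂ * Real.log r| ≤ C)
    (hintu : IntegrableOn (fun t => t * Real.exp (u t)) (Set.Ioi 0))
    (hintv : IntegrableOn (fun t => t * Real.exp (v t)) (Set.Ioi 0))
    (hintuv : IntegrableOn (fun t => t * Real.exp (u t + v t)) (Set.Ioi 0)) :
    ¬ ∃ τ₁ τ₂ : ℝ, 0 < τ₁ ∧ τ₁ < τ₂ ∧
      (∫ t in (0 : ℝ)..τ₁, t * Real.exp (u t) * (Real.exp (v t) - 1)) = 2 * N₂ ∧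
      (∫ t in (0 : ℝ)..τ₂, t * Real.exp (u t) * (Real.exp (v t) - 1)) = 2 * N₂ ∧
      v τ₂ < 0 ∧ 0 < v τ₁ ∧ StrictAntiOn v (Set.Ioo τ₁ τ₂) := by
  rintro ⟨τ₁, τ₂, hτ₁, hτ12, hF1, hF2, hv2, hv1, hmono⟩
  set g : ℝ → ℝ := fun t => t * Real.exp (u t) * (Real.exp (v t) - 1) with hg
  have hτ₂ : 0 < τ₂ := hτ₁.trans hτ12
  -- continuity of u, v, g on Ioi 0
  have hucont : ContinuousOn u (Set.Ioi 0) := hu.continuousOn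
  have hvcont : ContinuousOn v (Set.Ioi 0) := hv.continuousOn
  have hgcont : ContinuousOn g (Set.Ioi 0) := by
    exact (continuousOn_id.mul (hucont.rexp)).mul ((hvcont.rexp).sub continuousOn_const)
  -- integrability of g near 0
  have hgi : ∀ τ : ℝ, 0 < τ → IntegrableOn g (Set.Ioc 0 τ) := by
    intro τ hτ
    have hsub : Set.Ioc (0:ℝ) τ ⊆ Set.Ioi 0 := Set.Ioc_subset_Ioi_self
    have hmaj : IntegrableOn (fun t => t * Real.exp (u t + v t) + t * Real.exp (u t))
        (Set.Ioc 0 τ) := (hintuv.mono_set hsub).add (hintu.mono_set hsub)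
    refine Integrable.mono' hmaj
      ((hgcont.mono hsub).aestronglyMeasurable measurableSet_Ioc) ?_
    filter_upwards [ae_restrict_mem measurableSet_Ioc] with t ht
    have ht0 : 0 < t := ht.1
    have hpos : 0 < t * Real.exp (u t) := mul_pos ht0 (Real.exp_pos _)
    have habs : |Real.exp (v t) - 1| ≤ Real.exp (v t) + 1 := by
      have h1 := abs_sub (Real.exp (v t)) (1:ℝ)
      have h2 := Real.exp_pos (v t)
      rw [abs_of_pos h2, abs_one] at h1
      exact h1
    have : ‖g t‖ ≤ t * Real.exp (u t + v t) + t * Real.exp (u t) := by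
      rw [Real.norm_eq_abs]
      calc |g t| = t * Real.exp (u t) * |Real.exp (v t) - 1| := by
            rw [hg]; rw [abs_mul, abs_of_pos hpos]
        _ ≤ t * Real.exp (u t) * (Real.exp (v t) + 1) :=
            mul_le_mul_of_nonneg_left habs hpos.le
        _ = t * Real.exp (u t + v t) + t * Real.exp (u t) := by
            rw [Real.exp_add]; ring
    exact this
  -- FTC for b(r) = r * deriv v r
  have hb_sub : ∀ x y : ℝ, 0 < x → x ≤ y →
      y * deriv v y - x * deriv v x = -∫ t in x..y, g t := by
    intro x y hx hxy
    have hsub : Set.uIcc x y ⊆ Set.Ioi 0 := by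
      rw [Set.uIcc_of_le hxy]
      exact fun t ht => lt_of_lt_of_le hx ht.1
    have hder : ∀ t ∈ Set.uIcc x y,
        HasDerivAt (fun s => s * deriv v s) (-(g t)) t := fun t ht =>
      auxD2 v hv _ hODEv (hsub ht)
    have hint : IntervalIntegrable (fun t => -(g t)) volume x y :=
      ((hgcont.mono hsub).neg).intervalIntegrable
    have := integral_eq_sub_of_hasDerivAt hder hint
    simp only [_root_.intervalIntegral.integral_neg] at this
    linarith [this]
  -- interval integrability of g on subintervals of (0, τ]
  have hgii : ∀ x y : ℝ, 0 ≤ x → x ≤ y → IntervalIntegrable g volume x y := by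
    intro x y hx hxy
    rw [intervalIntegrable_iff_integrableOn_Ioc_of_le hxy]
    refine (hgi (y+1) (by linarith)).mono_set ?_
    exact Set.Ioc_subset_Ioc hx (by linarith)
  -- limit of b at 0+ is 2 N₂, hence b τ₁ = 0
  have hbτ₁ : τ₁ * deriv v τ₁ = 0 := by
    set L : ℝ := τ₁ * deriv v τ₁ + 2 * N₂ with hL
    -- the primitive of g is continuous up to 0
    have hprim : ContinuousOn (fun x => ∫ t in (0:ℝ)..x, g t) (Set.Icc 0 τ₁) := by
      have hig : IntegrableOn g (Set.uIcc 0 τ₁) := by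
        rw [Set.uIcc_of_le hτ₁.le]
        exact (integrableOn_Icc_iff_integrableOn_Ioc).mpr (hgi τ₁ hτ₁)
      have := intervalIntegral.continuousOn_primitive_interval hig
      rwa [Set.uIcc_of_le hτ₁.le] at this
    have hF0 : Filter.Tendsto (fun x => ∫ t in (0:ℝ)..x, g t)
        (nhdsWithin 0 (Set.Ioi 0)) (nhds 0) := by
      have h1 := hprim 0 (Set.left_mem_Icc.mpr hτ₁.le)
      have h2 : Filter.Tendsto (fun x => ∫ t in (0:ℝ)..x, g t)
          (nhdsWithin 0 (Set.Icc 0 τ₁)) (nhds 0) := by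
        simpa [intervalIntegral.integral_same] using h1.tendsto
      refine h2.mono_left ?_
      calc nhdsWithin (0:ℝ) (Set.Ioi 0) = nhdsWithin 0 (Set.Ioc 0 τ₁) :=
            (nhdsWithin_Ioc_eq_nhdsGT hτ₁).symm
        _ ≤ nhdsWithin 0 (Set.Icc 0 τ₁) := nhdsWithin_mono _ Set.Ioc_subset_Icc_self
    -- b tends to L at 0+
    have hbtend : Filter.Tendsto (fun x => x * deriv v x)
        (nhdsWithin 0 (Set.Ioi 0)) (nhds L) := by
      have heq : ∀ᶠ x in nhdsWithin (0:ℝ) (Set.Ioi 0),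
          L - (∫ t in (0:ℝ)..x, g t) = x * deriv v x := by
        filter_upwards [Ioo_mem_nhdsGT_of_mem (Set.left_mem_Ico.mpr hτ₁)] with x hx
        have h1 := hb_sub x τ₁ hx.1 hx.2.le
        have h2 := _root_.intervalIntegral.integral_add_adjacent_intervals
          (hgii 0 x le_rfl hx.1.le) (hgii x τ₁ hx.1.le hx.2.le)
        rw [hF1] at h2
        rw [hL]
        linarith
      have h3 : Filter.Tendsto (fun x => L - ∫ t in (0:ℝ)..x, g t)
          (nhdsWithin 0 (Set.Ioi 0)) (nhds (L - 0)) := tendsto_const_nhds.sub hF0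
      rw [sub_zero] at h3
      exact h3.congr' heq
    -- identify the limit using the asymptotics of v
    obtain ⟨C, εC, hεC, hC⟩ := hv0
    by_contra hne
    set d : ℝ := τ₁ * deriv v τ₁ with hdd
    have hd : d ≠ 0 := hne
    have hη : 0 < |d| / 2 := by positivity
    have hev : {s : ℝ | |s * deriv v s - L| < |d| / 2} ∈ nhdsWithin (0:ℝ) (Set.Ioi 0) := by
      have := Metric.tendsto_nhds.mp hbtend (|d| / 2) hη
      simp only [Real.dist_eq] at this
      exact this
    rw [mem_nhdsGT_iff_exists_Ioo_subset] at hev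
    obtain ⟨δ1, hδ1, hδ1sub⟩ := hev
    set δ : ℝ := min (min δ1 εC) (min τ₁ 1) / 2 with hδdef
    have hδpos : 0 < δ := by
      have h1 : (0:ℝ) < δ1 := hδ1
      positivity
    have hm1 : min (min δ1 εC) (min τ₁ 1) ≤ δ1 := le_trans (min_le_left _ _) (min_le_left _ _)
    have hm2 : min (min δ1 εC) (min τ₁ 1) ≤ εC := le_trans (min_le_left _ _) (min_le_right _ _)
    have hm3 : min (min δ1 εC) (min τ₁ 1) ≤ τ₁ := le_trans (min_le_right _ _) (min_le_left _ _)
    have hm4 : min (min δ1 εC) (min τ₁ 1) ≤ 1 := le_trans (min_le_right _ _) (min_le_right _ _)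
    have hδ1' : (0:ℝ) < δ1 := hδ1
    have hδlt1 : δ < δ1 := by rw [hδdef]; linarith
    have hδεC : δ < εC := by rw [hδdef]; linarith
    have hδτ : δ < τ₁ := by rw [hδdef]; linarith
    have hδone : δ < 1 := by rw [hδdef]; linarith
    have hlogδ : Real.log δ < 0 := Real.log_neg hδpos hδone
    have hbd : ∀ s : ℝ, 0 < s → s ≤ δ → |s * deriv v s - L| < |d| / 2 :=
      fun s h1 h2 => hδ1sub ⟨h1, lt_of_le_of_lt h2 hδlt1⟩
    set η : ℝ := |d| / 2 with hηdef
    set K : ℝ := |v δ - L * Real.log δ| with hKdef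
    -- key estimate for all small r
    have hkey : ∀ r : ℝ, 0 < r → r < δ → η * (-Real.log r) ≤ C + K := by
      intro r hr hrδ
      have hrδ' : r ≤ δ := hrδ.le
      have hsub2 : Set.uIcc r δ ⊆ Set.Ioi 0 := by
        rw [Set.uIcc_of_le hrδ']
        exact fun t ht => lt_of_lt_of_le hr ht.1
      have hlogr : Real.log r < 0 := Real.log_neg hr (hrδ.trans hδone)
      have hloginc : Real.log r ≤ Real.log δ := Real.log_le_log hr hrδ'
      -- FTC for v
      have hdercont : ContinuousOn (deriv v) (Set.uIcc r δ) := (auxDerivCont v hv).mono hsub2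
      have hftc := integral_eq_sub_of_hasDerivAt
        (fun t ht => auxD v hv (hsub2 ht)) hdercont.intervalIntegrable
      -- the L/s integral
      have h0not : (0:ℝ) ∉ Set.uIcc r δ := fun h0 => lt_irrefl 0 (Set.mem_Ioi.mp (hsub2 h0))
      have hcont1s : ContinuousOn (fun s : ℝ => 1 / s) (Set.uIcc r δ) :=
        continuousOn_const.div continuousOn_id (fun t ht => ne_of_gt (hsub2 ht))
      have hIL : (∫ s in r..δ, L * (1 / s)) = L * (Real.log δ - Real.log r) := by
        rw [_root_.intervalIntegral.integral_const_mul, integral_one_div h0not,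
          Real.log_div (ne_of_gt hδpos) (ne_of_gt hr)]
      have hintLs : IntervalIntegrable (fun s : ℝ => L * (1 / s)) volume r δ :=
        (continuousOn_const.mul hcont1s).intervalIntegrable
      have hintetas : IntervalIntegrable (fun s : ℝ => η * (1 / s)) volume r δ :=
        (continuousOn_const.mul hcont1s).intervalIntegrable
      -- error bound
      have hErr : |∫ s in r..δ, (deriv v s - L * (1 / s))| ≤ η * (Real.log δ - Real.log r) := by
        have hb2 := intervalIntegral.norm_integral_le_of_norm_le
          (f := fun s => deriv v s - L * (1 / s)) (g := fun s => η * (1 / s))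
          (μ := volume) (a := r) (b := δ) hrδ' ?_ hintetas
        · have hIe : (∫ s in r..δ, η * (1 / s)) = η * (Real.log δ - Real.log r) := by
            rw [_root_.intervalIntegral.integral_const_mul, integral_one_div h0not,
              Real.log_div (ne_of_gt hδpos) (ne_of_gt hr)]
          have hnn : (0:ℝ) ≤ η * (Real.log δ - Real.log r) :=
            mul_nonneg (by positivity) (by linarith)
          rw [hIe] at hb2
          simpa using hb2
        · rw [← ae_restrict_iff' measurableSet_Ioc]
          filter_upwards [ae_restrict_mem measurableSet_Ioc] with s hs
          have hs0 : 0 < s := lt_trans hr hs.1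
          have hsne : s ≠ 0 := ne_of_gt hs0
          have h5 : deriv v s - L * (1 / s) = (s * deriv v s - L) * (1 / s) := by
            field_simp
          rw [Real.norm_eq_abs, h5, abs_mul, abs_of_pos (by positivity : (0:ℝ) < 1 / s)]
          exact mul_le_mul_of_nonneg_right (hbd s hs0 hs.2).le (by positivity)
      -- split the integral
      have hintdv : IntervalIntegrable (deriv v) volume r δ := hdercont.intervalIntegrable
      have hsplit2 : (∫ s in r..δ, (deriv v s - L * (1 / s)))
          = (v δ - v r) - L * (Real.log δ - Real.log r) := by
        rw [_root_.intervalIntegral.integral_sub hintdv hintLs, hftc, hIL]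
      rw [hsplit2] at hErr
      -- asymptotic bound at r
      have hCr := hC r ⟨hr, lt_trans hrδ hδεC⟩
      -- the identity
      have hLd : L = d + 2 * N₂ := by rw [hL, hdd]
      have hid : d * Real.log r = (v r - 2 * N₂ * Real.log r) - (v δ - L * Real.log δ)
          + ((v δ - v r) - L * (Real.log δ - Real.log r)) := by
        rw [hLd]; ring
      have habs1 : |d * Real.log r| ≤ C + K + η * (Real.log δ - Real.log r) := by
        rw [hid]
        have h7 := abs_add_le ((v r - 2 * N₂ * Real.log r) - (v δ - L * Real.log δ))
          ((v δ - v r) - L * (Real.log δ - Real.log r))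
        have h8 := abs_sub (v r - 2 * N₂ * Real.log r) (v δ - L * Real.log δ)
        rw [hKdef]
        linarith
      have habs2 : |d * Real.log r| = |d| * (-Real.log r) := by
        rw [abs_mul, abs_of_neg hlogr]
      have h9 : η * (Real.log δ - Real.log r) ≤ η * (-Real.log r) := by
        have : (0:ℝ) ≤ η := by positivity
        nlinarith
      rw [habs2] at habs1
      have h10 : |d| = 2 * η := by rw [hηdef]; ring
      rw [h10] at habs1
      linarith
    -- choose r small enough to contradict hkey
    have hηpos : 0 < η := hη
    set M : ℝ := (C + K) / η + 1 with hM
    set r0 : ℝ := min (δ / 2) (Real.exp (-M)) with hr0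
    have hr0pos : 0 < r0 := lt_min (by positivity) (Real.exp_pos _)
    have hr0δ : r0 < δ := lt_of_le_of_lt (min_le_left _ _) (by linarith)
    have hlogr0 : Real.log r0 ≤ -M := by
      have := Real.log_le_log hr0pos (min_le_right (δ / 2) (Real.exp (-M)))
      rwa [Real.log_exp] at this
    have hfin := hkey r0 hr0pos hr0δ
    have hne0 : η ≠ 0 := ne_of_gt hηpos
    have hMval : η * M = C + K + η := by
      rw [hM]
      field_simp
    have h11 : η * M ≤ η * (-Real.log r0) :=
      mul_le_mul_of_nonneg_left (by linarith) hηpos.le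
    linarith
  -- b τ₂ = 0
  have hτint : (∫ t in τ₁..τ₂, g t) = 0 := by
    have := integral_add_adjacent_intervals (μ := volume) (f := g) (a := (0:ℝ)) (b := τ₁) (c := τ₂)
      (hgii 0 τ₁ le_rfl hτ₁.le) (hgii τ₁ τ₂ hτ₁.le hτ12.le)
    rw [hF1, hF2] at this; linarith
  have hbτ₂ : τ₂ * deriv v τ₂ = 0 := by
    have h := hb_sub τ₁ τ₂ hτ₁ hτ12.le
    rw [hτint] at h; rw [← hbτ₁]; linarith [h]
  -- Pohozaev identity
  have hPoh : (∫ t in τ₁..τ₂, 2 * t * (Real.exp (u t + v t) + Real.exp (v t) - Real.exp (u t)))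
      = (τ₂ * deriv u τ₂) * (τ₂ * deriv v τ₂)
        + τ₂ ^ 2 * (Real.exp (u τ₂ + v τ₂) + Real.exp (v τ₂) - Real.exp (u τ₂))
        - ((τ₁ * deriv u τ₁) * (τ₁ * deriv v τ₁)
        + τ₁ ^ 2 * (Real.exp (u τ₁ + v τ₁) + Real.exp (v τ₁) - Real.exp (u τ₁))) := by
    have hIsub : Set.uIcc τ₁ τ₂ ⊆ Set.Ioi 0 := by
      rw [Set.uIcc_of_le hτ12.le]
      exact fun t ht => lt_of_lt_of_le hτ₁ ht.1
    have hder : ∀ r ∈ Set.uIcc τ₁ τ₂,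
        HasDerivAt (fun s => (s * deriv u s) * (s * deriv v s)
          + s ^ 2 * (Real.exp (u s + v s) + Real.exp (v s) - Real.exp (u s)))
          (2 * r * (Real.exp (u r + v r) + Real.exp (v r) - Real.exp (u r))) r := by
      intro r hrm
      have hr : (0:ℝ) < r := hIsub hrm
      have hA : HasDerivAt (fun s => s * deriv u s)
          (-(r * Real.exp (v r) * (Real.exp (u r) + 1))) r := auxD2 u hu _ hODEu hr
      have hB : HasDerivAt (fun s => s * deriv v s)
          (-(r * Real.exp (u r) * (Real.exp (v r) - 1))) r := auxD2 v hv _ hODEv hr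
      have hAB := hA.mul hB
      have hu' : HasDerivAt u (deriv u r) r := auxD u hu hr
      have hv' : HasDerivAt v (deriv v r) r := auxD v hv hr
      have hEuv : HasDerivAt (fun s => Real.exp (u s + v s))
          (Real.exp (u r + v r) * (deriv u r + deriv v r)) r := (hu'.add hv').exp
      have hEv : HasDerivAt (fun s => Real.exp (v s)) (Real.exp (v r) * deriv v r) r :=
        hv'.exp
      have hEu : HasDerivAt (fun s => Real.exp (u s)) (Real.exp (u r) * deriv u r) r :=
        hu'.exp
      have hsq : HasDerivAt (fun s : ℝ => s ^ 2) (2 * r) r := by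
        simpa using hasDerivAt_pow 2 r
      have hterm2 := hsq.mul ((hEuv.add hEv).sub hEu)
      have htot := hAB.add hterm2
      refine htot.congr_deriv ?_
      simp only [Pi.add_apply, Pi.sub_apply]
      rw [Real.exp_add]
      ring
    have hcontI : ContinuousOn
        (fun t => 2 * t * (Real.exp (u t + v t) + Real.exp (v t) - Real.exp (u t)))
        (Set.uIcc τ₁ τ₂) := by
      have h1 : ContinuousOn u (Set.uIcc τ₁ τ₂) := hucont.mono hIsub
      have h2 : ContinuousOn v (Set.uIcc τ₁ τ₂) := hvcont.mono hIsub
      exact (continuousOn_const.mul continuousOn_id).mul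
        (((h1.add h2).rexp.add h2.rexp).sub h1.rexp)
    exact integral_eq_sub_of_hasDerivAt hder hcontI.intervalIntegrable
  -- v t ≥ v τ₂ on [τ₁, τ₂]
  have hvge : ∀ t ∈ Set.Icc τ₁ τ₂, v τ₂ ≤ v t := by
    intro t ht
    rcases eq_or_lt_of_le ht.2 with h2 | h2
    · rw [h2]
    rcases eq_or_lt_of_le ht.1 with h1 | h1
    · rw [← h1]; linarith
    have hc : ContinuousAt v τ₂ :=
      hvcont.continuousAt (isOpen_Ioi.mem_nhds hτ₂)
    have htd : Filter.Tendsto v (nhdsWithin τ₂ (Set.Iio τ₂)) (nhds (v τ₂)) :=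
      hc.continuousWithinAt.tendsto
    refine le_of_tendsto htd ?_
    filter_upwards [Ioo_mem_nhdsLT_of_mem (Set.mem_Ioc.mpr ⟨h2, le_refl τ₂⟩)] with s hs
    exact (hmono ⟨h1, h2⟩ ⟨h1.trans hs.1, hs.2⟩ hs.1).le
  -- final contradiction
  have hIsub : Set.uIcc τ₁ τ₂ ⊆ Set.Ioi 0 := by
    rw [Set.uIcc_of_le hτ12.le]
    exact fun t ht => lt_of_lt_of_le hτ₁ ht.1
  have hvint : IntervalIntegrable (fun t => t * Real.exp (v t)) volume τ₁ τ₂ :=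
    (continuousOn_id.mul ((hvcont.mono hIsub).rexp)).intervalIntegrable
  have hsplit : (∫ t in τ₁..τ₂, 2 * t * (Real.exp (u t + v t) + Real.exp (v t) - Real.exp (u t)))
      = 2 * (∫ t in τ₁..τ₂, g t) + 2 * ∫ t in τ₁..τ₂, t * Real.exp (v t) := by
    have heq : (fun t => 2 * t * (Real.exp (u t + v t) + Real.exp (v t) - Real.exp (u t)))
        = fun t => 2 * g t + 2 * (t * Real.exp (v t)) := by
      funext t
      simp only [hg, Real.exp_add]; ring
    rw [heq, _root_.intervalIntegral.integral_add ((hgii τ₁ τ₂ hτ₁.le hτ12.le).const_mul 2)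
      (hvint.const_mul 2), _root_.intervalIntegral.integral_const_mul,
      _root_.intervalIntegral.integral_const_mul]
  have hlow : (∫ t in τ₁..τ₂, t * Real.exp (v t)) ≥ Real.exp (v τ₂) * (τ₂^2 - τ₁^2) / 2 := by
    have hcint : IntervalIntegrable (fun t => t * Real.exp (v τ₂)) volume τ₁ τ₂ :=
      (continuousOn_id.mul continuousOn_const).intervalIntegrable
    have hmono2 := _root_.intervalIntegral.integral_mono_on hτ12.le hcint hvint
      (fun x hx => by
        have hx0 : 0 < x := lt_of_lt_of_le hτ₁ hx.1
        exact mul_le_mul_of_nonneg_left (Real.exp_le_exp.mpr (hvge x hx)) hx0.le)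
    have hval : (∫ t in τ₁..τ₂, t * Real.exp (v τ₂))
        = Real.exp (v τ₂) * (τ₂^2 - τ₁^2) / 2 := by
      rw [_root_.intervalIntegral.integral_mul_const, integral_id]; ring
    rw [hval] at hmono2
    exact hmono2
  rw [hsplit, hτint, hbτ₁, hbτ₂] at hPoh
  simp only [mul_zero, zero_mul, zero_add, add_zero] at hPoh
  have e1 : (0:ℝ) < Real.exp (u τ₁) := Real.exp_pos _
  have e2 : (0:ℝ) < Real.exp (u τ₂) := Real.exp_pos _
  have e3 : (1:ℝ) < Real.exp (v τ₁) := by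
    rw [show (1:ℝ) = Real.exp 0 from (Real.exp_zero).symm]
    exact Real.exp_lt_exp.mpr hv1
  have e4 : Real.exp (v τ₂) < 1 := by
    rw [show (1:ℝ) = Real.exp 0 from (Real.exp_zero).symm]
    exact Real.exp_lt_exp.mpr hv2
  rw [Real.exp_add, Real.exp_add] at hPoh
  have h1 : 0 < τ₂ ^ 2 * (Real.exp (u τ₂) * (1 - Real.exp (v τ₂))) :=
    mul_pos (pow_pos hτ₂ 2) (mul_pos e2 (by linarith))
  have h2 : 0 < τ₁ ^ 2 * (Real.exp (u τ₁) * (Real.exp (v τ₁) - 1)) :=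
    mul_pos (pow_pos hτ₁ 2) (mul_pos e1 (by linarith))
  have h3 : 0 < τ₁ ^ 2 * (Real.exp (v τ₁) - Real.exp (v τ₂)) :=
    mul_pos (pow_pos hτ₁ 2) (by linarith)
  nlinarith [hlow, hPoh, h1, h2, h3]
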